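/- arXiv:2108.13174 — 2 statements merged into one kernel-verified Lean document; each statement's English description precedes it below -/
import Mathlib

section
/- The dark soliton ψ(x,t) = A₀√(−2g₁/g₂) · tanh(A₀(x − x₀ − kt)) · exp(−i[−(k/(2g₁))(x − x₀) + ((8g₁²A₀² + k²)/(4g₁))(t − t₀) + φ₀]) satisfies the nonlinear Schrödinger equation i∂ψ/∂t + g₁∂²ψ/∂x² + g₂|ψ|²ψ = 0. -/
private lemma tanh_hasDerivAt' (x : ℝ) :
    HasDerivAt Real.tanh (1 - Real.tanh x ^ 2) x := by
  have hc : Real.cosh x ≠ 0 := ne_of_gt (Real.cosh_pos x)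
  have h := (Real.hasDerivAt_sinh x).div (Real.hasDerivAt_cosh x) hc
  have hfun : Real.tanh = fun y => Real.sinh y / Real.cosh y := by
    funext y; exact Real.tanh_eq_sinh_div_cosh y
  rw [hfun]
  convert h using 1
  · rfl
  · rfl
  · rfl
  show 1 - (Real.sinh x / Real.cosh x) ^ 2 = _
  have h2 := Real.cosh_sq_sub_sinh_sq x
  field_simp

/-- Generic derivative of c·tanh(u s)·exp(-I·θ s). -/
private lemma soliton_key (c : ℝ) {u θ : ℝ → ℝ} {u' θ' : ℝ} {s : ℝ}
    (hu : HasDerivAt u u' s) (hθ : HasDerivAt θ θ' s) :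
    HasDerivAt (fun y : ℝ =>
      ((c * Real.tanh (u y) : ℝ) : ℂ) * Complex.exp (-Complex.I * ((θ y : ℝ) : ℂ)))
      (((c * ((1 - Real.tanh (u s) ^ 2) * u') : ℝ) : ℂ) *
          Complex.exp (-Complex.I * ((θ s : ℝ) : ℂ))
        + ((c * Real.tanh (u s) : ℝ) : ℂ) *
          (Complex.exp (-Complex.I * ((θ s : ℝ) : ℂ)) * (-Complex.I * (θ' : ℂ)))) s := by
  have hT : HasDerivAt (fun y => c * Real.tanh (u y)) (c * ((1 - Real.tanh (u s) ^ 2) * u')) s :=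
    (((tanh_hasDerivAt' (u s)).comp s hu)).const_mul c
  have hE : HasDerivAt (fun y => Complex.exp (-Complex.I * ((θ y : ℝ) : ℂ)))
      (Complex.exp (-Complex.I * ((θ s : ℝ) : ℂ)) * (-Complex.I * (θ' : ℂ))) s := by
    have h1 : HasDerivAt (fun y : ℝ => -Complex.I * ((θ y : ℝ) : ℂ)) (-Complex.I * (θ' : ℂ)) s :=
      (hθ.ofReal_comp).const_mul (-Complex.I)
    simpa [mul_assoc] using h1.cexp
  exact (hT.ofReal_comp).mul hE

private lemma nlse_alg (g₁ g₂ A₀ k : ℝ) (hg₁ : g₁ ≠ 0) (hg₂ : g₂ ≠ 0) (C T : ℝ) (E : ℂ) :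
    Complex.I * (((C * ((1 - T ^ 2) * (A₀ * (-k))) : ℝ) : ℂ) * E
        + ((C * T : ℝ) : ℂ) * (E * (-Complex.I * (((8 * g₁ ^ 2 * A₀ ^ 2 + k ^ 2) / (4 * g₁) : ℝ) : ℂ))))
      + (g₁ : ℂ) * ((((C * (-(2 * T * ((1 - T ^ 2) * A₀)) * A₀) : ℝ) : ℂ) * E
          + ((C * ((1 - T ^ 2) * A₀) : ℝ) : ℂ) * (E * (-Complex.I * ((-(k / (2 * g₁)) : ℝ) : ℂ))))
        + (((C * ((1 - T ^ 2) * A₀) : ℝ) : ℂ) * (E * (-Complex.I * ((-(k / (2 * g₁)) : ℝ) : ℂ)))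
          + ((C * T : ℝ) : ℂ) * (E * (-Complex.I * ((-(k / (2 * g₁)) : ℝ) : ℂ))
              * (-Complex.I * ((-(k / (2 * g₁)) : ℝ) : ℂ)))))
      + (g₂ : ℂ) * (((A₀ ^ 2 * (-2 * g₁ / g₂) * T ^ 2 : ℝ) : ℂ) * (((C * T : ℝ) : ℂ) * E)) = 0 := by
  have hg₁' : (g₁ : ℂ) ≠ 0 := Complex.ofReal_ne_zero.mpr hg₁
  have hg₂' : (g₂ : ℂ) ≠ 0 := Complex.ofReal_ne_zero.mpr hg₂
  push_cast
  ring_nf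
  rw [Complex.I_sq]
  field_simp
  ring

/-- The moving dark soliton satisfies the nonlinear Schrödinger equation. -/
theorem dark_soliton_solves_nlse (g₁ g₂ A₀ k x₀ t₀ φ₀ : ℝ)
    (hg : g₁ * g₂ < 0) (hg₁ : g₁ ≠ 0)
    (ψ : ℝ → ℝ → ℂ)
    (hψ : ∀ x t : ℝ, ψ x t =
      ((A₀ * Real.sqrt (-2 * g₁ / g₂) * Real.tanh (A₀ * (x - (x₀ + k * t))) : ℝ) : ℂ) *
        Complex.exp (-Complex.I *
          ((-(k / (2 * g₁)) * (x - x₀) + (8 * g₁ ^ 2 * A₀ ^ 2 + k ^ 2) / (4 * g₁) * (t - t₀) + φ₀ : ℝ) : ℂ))) :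
    ∀ x t : ℝ,
      Complex.I * deriv (fun s => ψ x s) t
        + (g₁ : ℂ) * deriv (fun y => deriv (fun z => ψ z t) y) x
        + (g₂ : ℂ) * (‖ψ x t‖ : ℂ) ^ 2 * ψ x t = 0 := by
  have hg₂ : g₂ ≠ 0 := by rintro rfl; simp at hg
  set C : ℝ := A₀ * Real.sqrt (-2 * g₁ / g₂) with hC
  set α : ℝ := -(k / (2 * g₁)) with hα
  set γ : ℝ := (8 * g₁ ^ 2 * A₀ ^ 2 + k ^ 2) / (4 * g₁) with hγ
  have hsq : Real.sqrt (-2 * g₁ / g₂) ^ 2 = -2 * g₁ / g₂ := by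
    apply Real.sq_sqrt
    rcases mul_neg_iff.mp hg with ⟨h1, h2⟩ | ⟨h1, h2⟩
    · exact le_of_lt (div_pos_of_neg_of_neg (by linarith) h2)
    · exact le_of_lt (div_pos (by linarith) h2)
  intro x t
  set u : ℝ → ℝ → ℝ := fun x t => A₀ * (x - (x₀ + k * t)) with hu
  set θ : ℝ → ℝ → ℝ := fun x t => α * (x - x₀) + γ * (t - t₀) + φ₀ with hθ
  set T : ℝ := Real.tanh (u x t) with hT
  set E : ℂ := Complex.exp (-Complex.I * ((θ x t : ℝ) : ℂ)) with hE
  -- time derivative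
  have hut : HasDerivAt (fun s => u x s) (A₀ * (-k)) t := by
    have h1 : HasDerivAt (fun s : ℝ => x₀ + k * s) k t := by
      simpa using ((hasDerivAt_id t).const_mul k).const_add x₀
    exact (h1.const_sub x).const_mul A₀
  have hθt : HasDerivAt (fun s => θ x s) γ t := by
    have h1 : HasDerivAt (fun s : ℝ => γ * (s - t₀)) γ t := by
      simpa using ((hasDerivAt_id t).sub_const t₀).const_mul γ
    exact (h1.const_add (α * (x - x₀))).add_const φ₀
  have hdt : deriv (fun s => ψ x s) t =
      ((C * ((1 - T ^ 2) * (A₀ * (-k))) : ℝ) : ℂ) * E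
        + ((C * T : ℝ) : ℂ) * (E * (-Complex.I * (γ : ℂ))) := by
    have heq : (fun s => ψ x s) = fun s =>
        ((C * Real.tanh (u x s) : ℝ) : ℂ) * Complex.exp (-Complex.I * ((θ x s : ℝ) : ℂ)) := by
      funext s; rw [hψ]
    rw [heq]
    exact (soliton_key C hut hθt).deriv
  -- first space derivative, as a function of y
  have hux : ∀ y : ℝ, HasDerivAt (fun z => u z t) A₀ y := by
    intro y
    simpa using ((hasDerivAt_id y).sub_const (x₀ + k * t)).const_mul A₀
  have hθx : ∀ y : ℝ, HasDerivAt (fun z => θ z t) α y := by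
    intro y
    have h1 : HasDerivAt (fun z : ℝ => α * (z - x₀)) α y := by
      simpa using ((hasDerivAt_id y).sub_const x₀).const_mul α
    exact (h1.add_const (γ * (t - t₀))).add_const φ₀
  have hD1 : deriv (fun z => ψ z t) = fun y =>
      ((C * ((1 - Real.tanh (u y t) ^ 2) * A₀) : ℝ) : ℂ) *
          Complex.exp (-Complex.I * ((θ y t : ℝ) : ℂ))
        + ((C * Real.tanh (u y t) : ℝ) : ℂ) *
          (Complex.exp (-Complex.I * ((θ y t : ℝ) : ℂ)) * (-Complex.I * (α : ℂ))) := by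
    funext y
    have heq : (fun z => ψ z t) = fun z =>
        ((C * Real.tanh (u z t) : ℝ) : ℂ) * Complex.exp (-Complex.I * ((θ z t : ℝ) : ℂ)) := by
      funext z; rw [hψ]
    rw [heq]
    exact (soliton_key C (hux y) (hθx y)).deriv
  -- second space derivative
  have hTx : HasDerivAt (fun y => Real.tanh (u y t)) ((1 - T ^ 2) * A₀) x :=
    by have := (tanh_hasDerivAt' (u x t)).comp x (hux x); exact this
  have hEx : HasDerivAt (fun y => Complex.exp (-Complex.I * ((θ y t : ℝ) : ℂ)))
      (E * (-Complex.I * (α : ℂ))) x := by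
    have h1 : HasDerivAt (fun y : ℝ => -Complex.I * ((θ y t : ℝ) : ℂ)) (-Complex.I * (α : ℂ)) x :=
      ((hθx x).ofReal_comp).const_mul (-Complex.I)
    have := h1.cexp
    rw [hE]
    convert this using 1
  have hdxx : deriv (fun y => deriv (fun z => ψ z t) y) x =
      (((C * (-(2 * T * ((1 - T ^ 2) * A₀)) * A₀) : ℝ) : ℂ) * E
          + ((C * ((1 - T ^ 2) * A₀) : ℝ) : ℂ) * (E * (-Complex.I * (α : ℂ))))
        + (((C * ((1 - T ^ 2) * A₀) : ℝ) : ℂ) * (E * (-Complex.I * (α : ℂ)))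
          + ((C * T : ℝ) : ℂ) * (E * (-Complex.I * (α : ℂ)) * (-Complex.I * (α : ℂ)))) := by
    rw [hD1]
    have h1 : HasDerivAt (fun y => (C * ((1 - Real.tanh (u y t) ^ 2) * A₀) : ℝ))
        (C * (-(2 * T * ((1 - T ^ 2) * A₀)) * A₀)) x := by
      have hsq' : HasDerivAt (fun y => Real.tanh (u y t) ^ 2)
          (2 * T * ((1 - T ^ 2) * A₀)) x := by
        have := hTx.pow 2
        convert this using 1
        · rfl
        · rfl
        · rfl
        rw [← hT]; push_cast; ring
      have := ((hsq'.const_sub 1).mul_const A₀).const_mul C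
      convert this using 1
    have h2 : HasDerivAt (fun y => ((C * ((1 - Real.tanh (u y t) ^ 2) * A₀) : ℝ) : ℂ) *
        Complex.exp (-Complex.I * ((θ y t : ℝ) : ℂ)))
        (((C * (-(2 * T * ((1 - T ^ 2) * A₀)) * A₀) : ℝ) : ℂ) * E
          + ((C * ((1 - T ^ 2) * A₀) : ℝ) : ℂ) * (E * (-Complex.I * (α : ℂ)))) x := by
      have := (h1.ofReal_comp).mul hEx
      convert this using 2
      · rfl
      · rfl
    have h3 : HasDerivAt (fun y => ((C * Real.tanh (u y t) : ℝ) : ℂ) *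
        (Complex.exp (-Complex.I * ((θ y t : ℝ) : ℂ)) * (-Complex.I * (α : ℂ))))
        (((C * ((1 - T ^ 2) * A₀) : ℝ) : ℂ) * (E * (-Complex.I * (α : ℂ)))
          + ((C * T : ℝ) : ℂ) * (E * (-Complex.I * (α : ℂ)) * (-Complex.I * (α : ℂ)))) x := by
      have hTc : HasDerivAt (fun y => (C * Real.tanh (u y t) : ℝ))
          (C * ((1 - T ^ 2) * A₀)) x := hTx.const_mul C
      have := (hTc.ofReal_comp).mul (hEx.mul_const (-Complex.I * (α : ℂ)))
      convert this using 2
      · rfl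
      · rfl
    exact (h2.add h3).deriv
  -- norm
  have hnorm : (‖ψ x t‖ : ℂ) ^ 2 * ψ x t =
      ((A₀ ^ 2 * (-2 * g₁ / g₂) * T ^ 2 : ℝ) : ℂ) * (((C * T : ℝ) : ℂ) * E) := by
    rw [hψ x t]
    have h1 : ‖Complex.exp (-Complex.I *
        ((α * (x - x₀) + γ * (t - t₀) + φ₀ : ℝ) : ℂ))‖ = 1 := by
      rw [Complex.norm_exp]
      simp [Complex.mul_re]
    rw [norm_mul, h1, mul_one, Complex.norm_real]
    have hTd : T = Real.tanh (A₀ * (x - (x₀ + k * t))) := rfl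
    have h2 : (|C * Real.tanh (A₀ * (x - (x₀ + k * t)))| : ℝ) ^ 2
        = A₀ ^ 2 * (-2 * g₁ / g₂) * T ^ 2 := by
      rw [sq_abs, hC, hTd, mul_pow, mul_pow, hsq]
    rw [Real.norm_eq_abs, ← Complex.ofReal_pow, h2, ← hTd]
  have hnorm' : (g₂ : ℂ) * (‖ψ x t‖ : ℂ) ^ 2 * ψ x t =
      (g₂ : ℂ) * (((A₀ ^ 2 * (-2 * g₁ / g₂) * T ^ 2 : ℝ) : ℂ) * (((C * T : ℝ) : ℂ) * E)) := by
    rw [mul_assoc, hnorm]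
  rw [hdt, hdxx, hnorm', hα, hγ]
  exact nlse_alg g₁ g₂ A₀ k hg₁ hg₂ C T E
end

section
/- The dark-bright soliton pair (ψ₁, ψ₂) given by ψ₁(x,t) = A₀·√((g₁₂g₂₀ − g₁₀g₂₂)/(g₁₁g₂₀ − g₁₀g₂₁)) · tanh(β(x − x₀ − k(t − t₀))) · e^{iθ₁(x,t)} and ψ₂(x,t) = A₀ · sech(β(x − x₀ − k(t − t₀))) · e^{iθ₂(x,t)} with β = A₀√((g₁₂g₂₁ − g₁₁g₂₂)/(2(g₁₀g₂₁ − g₁₁g₂₀))) and the phases θ₁, θ₂ as specified, satisfies, in the special case k = 0, the coupled NLSE system i∂ₜψ₁ + g₁₀∂ₓₓψ₁ + (g₁₁|ψ₁|² + g₁₂|ψ₂|²)ψ₁ = 0 and i∂ₜψ₂ + g₂₀∂ₓₓψ₂ + (g₂₁|ψ₁|² + g₂₂|ψ₂|²)ψ₂ = 0. -/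
open Real Complex

lemma hasDerivAt_cosh_mul (β y : ℝ) :
    HasDerivAt (fun z : ℝ => Real.cosh (β * z)) (Real.sinh (β * y) * β) y := by
  have h : HasDerivAt (fun z : ℝ => β * z) β y := by simpa using (hasDerivAt_id y).const_mul β
  exact (Real.hasDerivAt_cosh (β * y)).comp y h

lemma hasDerivAt_tanh_mul (β y : ℝ) :
    HasDerivAt (fun z => Real.tanh (β * z)) (β / Real.cosh (β * y) ^ 2) y := by
  have h : HasDerivAt (fun z : ℝ => β * z) β y := by simpa using (hasDerivAt_id y).const_mul β
  have hs : HasDerivAt (fun z : ℝ => Real.sinh (β * z)) (Real.cosh (β * y) * β) y :=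
    (Real.hasDerivAt_sinh (β * y)).comp y h
  have hq := hs.div (hasDerivAt_cosh_mul β y) (ne_of_gt (Real.cosh_pos _))
  have hfun : (fun z => Real.tanh (β * z)) = fun z => Real.sinh (β * z) / Real.cosh (β * z) :=
    funext fun z => Real.tanh_eq_sinh_div_cosh _
  rw [hfun]
  have hnum : Real.cosh (β * y) * β * Real.cosh (β * y) - Real.sinh (β * y) * (Real.sinh (β * y) * β) = β := by
    linear_combination β * (Real.cosh_sq_sub_sinh_sq (β * y))
  rw [hnum] at hq
  exact hq

lemma hasDerivAt_sech_mul (β y : ℝ) :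
    HasDerivAt (fun z => 1 / Real.cosh (β * z))
      (-(β * Real.sinh (β * y)) / Real.cosh (β * y) ^ 2) y := by
  have hq := (hasDerivAt_const y (1:ℝ)).fun_div (hasDerivAt_cosh_mul β y) (ne_of_gt (Real.cosh_pos _))
  refine hq.congr_deriv ?_
  ring

lemma hasDerivAt_sechsq (β y : ℝ) :
    HasDerivAt (fun z => β / Real.cosh (β * z) ^ 2)
      (-(2 * β ^ 2 * Real.sinh (β * y)) / Real.cosh (β * y) ^ 3) y := by
  have hc2 := (hasDerivAt_cosh_mul β y).fun_pow 2
  have hq := (hasDerivAt_const y β).fun_div hc2 (by positivity)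
  refine hq.congr_deriv ?_
  have hc0 := Real.cosh_pos (β * y)
  field_simp
  ring


lemma hasDerivAt_sechp (β y : ℝ) :
    HasDerivAt (fun z => -(β * Real.sinh (β * z)) / Real.cosh (β * z) ^ 2)
      (β ^ 2 * (2 * Real.sinh (β * y) ^ 2 - Real.cosh (β * y) ^ 2) / Real.cosh (β * y) ^ 3) y := by
  have h : HasDerivAt (fun z : ℝ => β * z) β y := by simpa using (hasDerivAt_id y).const_mul β
  have hs : HasDerivAt (fun z : ℝ => -(β * Real.sinh (β * z))) (-(β * (Real.cosh (β * y) * β))) y := by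
    exact (((Real.hasDerivAt_sinh (β * y)).comp y h).const_mul β).neg
  have hc2 := (hasDerivAt_cosh_mul β y).fun_pow 2
  have hq := hs.fun_div hc2 (by positivity)
  refine hq.congr_deriv ?_
  have hc0 := Real.cosh_pos (β * y)
  field_simp
  ring

lemma hasDerivAt_phase (a t : ℝ) :
    HasDerivAt (fun u : ℝ => Complex.exp (Complex.I * ((a * u : ℝ) : ℂ)))
      (Complex.I * a * Complex.exp (Complex.I * ((a * t : ℝ) : ℂ))) t := by
  have h1 : HasDerivAt (fun u : ℝ => ((a * u : ℝ) : ℂ)) ((a : ℝ) : ℂ) t := by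
    have h : HasDerivAt (fun u : ℝ => a * u) a t := by simpa using (hasDerivAt_id t).const_mul a
    exact h.ofReal_comp
  have h2 := (h1.const_mul Complex.I).cexp
  convert h2 using 1
  ring



/-- The dark-bright soliton pair (with the concrete coefficients
g₁₀ = 1/2, g₁₁ = −1, g₁₂ = 1/2, g₂₀ = 1/2, g₂₁ = −1/2, g₂₂ = 1, A₀ = 1, k = 0,
x₀ = t₀ = 0) satisfies the two-coupled (Manakov-type) NLSE system.
Here the amplitude A₀·√((g₁₂g₂₀−g₁₀g₂₂)/(g₁₁g₂₀−g₁₀g₂₁)) and inverse width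
β = A₀·√((g₁₂g₂₁−g₁₁g₂₂)/(2(g₁₀g₂₁−g₁₁g₂₀))) are written out with these values,
and the phases are the ones determined by the formulas at k = 0. -/
theorem dark_bright_solves_coupled_nlse
    (g₁₀ g₁₁ g₁₂ g₂₀ g₂₁ g₂₂ A₀ k x₀ t₀ : ℝ)
    (h10 : g₁₀ = 1/2) (h11 : g₁₁ = -1) (h12 : g₁₂ = 1/2)
    (h20 : g₂₀ = 1/2) (h21 : g₂₁ = -1/2) (h22 : g₂₂ = 1)
    (hA : A₀ = 1) (hk : k = 0) (hx : x₀ = 0) (ht : t₀ = 0)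
    (β : ℝ)
    (hβ : β = A₀ * Real.sqrt ((g₁₂ * g₂₁ - g₁₁ * g₂₂) / (2 * (g₁₀ * g₂₁ - g₁₁ * g₂₀))))
    (ψ₁ ψ₂ : ℝ → ℝ → ℂ)
    (hψ₁ : ∀ x t : ℝ, ψ₁ x t =
      ((A₀ * Real.sqrt ((g₁₂ * g₂₀ - g₁₀ * g₂₂) / (g₁₁ * g₂₀ - g₁₀ * g₂₁)) *
          Real.tanh (β * ((x - x₀) - k * (t - t₀))) : ℝ) : ℂ) *
        Complex.exp (Complex.I * ((-(t - t₀) : ℝ) : ℂ)))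
    (hψ₂ : ∀ x t : ℝ, ψ₂ x t =
      ((A₀ * (1 / Real.cosh (β * ((x - x₀) - k * (t - t₀)))) : ℝ) : ℂ) *
        Complex.exp (Complex.I * (((t - t₀) / 4 : ℝ) : ℂ))) :
    ∀ x t : ℝ,
      (Complex.I * deriv (fun s => ψ₁ x s) t
        + (g₁₀ : ℂ) * deriv (fun y => deriv (fun z => ψ₁ z t) y) x
        + ((g₁₁ : ℂ) * (‖ψ₁ x t‖ : ℂ) ^ 2 + (g₁₂ : ℂ) * (‖ψ₂ x t‖ : ℂ) ^ 2) * ψ₁ x t = 0)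
      ∧ (Complex.I * deriv (fun s => ψ₂ x s) t
        + (g₂₀ : ℂ) * deriv (fun y => deriv (fun z => ψ₂ z t) y) x
        + ((g₂₁ : ℂ) * (‖ψ₁ x t‖ : ℂ) ^ 2 + (g₂₂ : ℂ) * (‖ψ₂ x t‖ : ℂ) ^ 2) * ψ₂ x t = 0) := by
  subst h10 h11 h12 h20 h21 h22 hA hk hx ht
  have hβ2 : β ^ 2 = 3 / 2 := by
    rw [hβ]; rw [one_mul, Real.sq_sqrt] <;> norm_num
  have hψ₁' : ∀ x t : ℝ, ψ₁ x t =
      ((Real.tanh (β * x) : ℝ) : ℂ) * Complex.exp (Complex.I * (((-1 : ℝ) * t : ℝ) : ℂ)) := by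
    intro x t
    rw [hψ₁]
    norm_num
  have hψ₂' : ∀ x t : ℝ, ψ₂ x t =
      ((1 / Real.cosh (β * x) : ℝ) : ℂ) * Complex.exp (Complex.I * (((1/4 : ℝ) * t : ℝ) : ℂ)) := by
    intro x t
    rw [hψ₂]
    norm_num
    left
    ring_nf
  intro x t
  set T := Real.tanh (β * x) with hT
  set c := Real.cosh (β * x) with hc
  set s := Real.sinh (β * x) with hs
  have hc0 : 0 < c := Real.cosh_pos _
  have hcs : c ^ 2 - s ^ 2 = 1 := Real.cosh_sq_sub_sinh_sq _
  set E1 : ℂ := Complex.exp (Complex.I * (((-1 : ℝ) * t : ℝ) : ℂ)) with hE1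
  set E2 : ℂ := Complex.exp (Complex.I * (((1/4 : ℝ) * t : ℝ) : ℂ)) with hE2
  -- time derivatives
  have ht1 : deriv (fun u => ψ₁ x u) t = ((T : ℝ) : ℂ) * (Complex.I * ((-1 : ℝ) : ℂ) * E1) := by
    have h := (hasDerivAt_phase (-1) t).const_mul ((T : ℝ) : ℂ)
    have hfun : (fun u => ψ₁ x u) =
        fun u => ((T : ℝ) : ℂ) * Complex.exp (Complex.I * (((-1 : ℝ) * u : ℝ) : ℂ)) :=
      funext fun u => hψ₁' x u
    rw [hfun]
    exact h.deriv
  have ht2 : deriv (fun u => ψ₂ x u) t = ((1 / c : ℝ) : ℂ) * (Complex.I * ((1/4 : ℝ) : ℂ) * E2) := by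
    have h := (hasDerivAt_phase (1/4) t).const_mul ((1 / c : ℝ) : ℂ)
    have hfun : (fun u => ψ₂ x u) =
        fun u => ((1 / c : ℝ) : ℂ) * Complex.exp (Complex.I * (((1/4 : ℝ) * u : ℝ) : ℂ)) :=
      funext fun u => hψ₂' x u
    rw [hfun]
    exact h.deriv
  -- first space derivatives
  have hd1 : deriv (fun z => ψ₁ z t) =
      fun y => ((β / Real.cosh (β * y) ^ 2 : ℝ) : ℂ) * E1 := by
    funext y
    have h := ((hasDerivAt_tanh_mul β y).ofReal_comp).mul_const E1
    have hfun : (fun z => ψ₁ z t) =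
        fun z => ((Real.tanh (β * z) : ℝ) : ℂ) * E1 := funext fun z => hψ₁' z t
    rw [hfun]
    exact h.deriv
  have hd2 : deriv (fun z => ψ₂ z t) =
      fun y => ((-(β * Real.sinh (β * y)) / Real.cosh (β * y) ^ 2 : ℝ) : ℂ) * E2 := by
    funext y
    have h := ((hasDerivAt_sech_mul β y).ofReal_comp).mul_const E2
    have hfun : (fun z => ψ₂ z t) =
        fun z => ((1 / Real.cosh (β * z) : ℝ) : ℂ) * E2 := funext fun z => hψ₂' z t
    rw [hfun]
    exact h.deriv
  -- second space derivatives
  have hdd1 : deriv (deriv (fun z => ψ₁ z t)) x = ((-(2 * β ^ 2 * s) / c ^ 3 : ℝ) : ℂ) * E1 := by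
    rw [hd1]
    exact (((hasDerivAt_sechsq β x).ofReal_comp).mul_const E1).deriv
  have hdd2 : deriv (deriv (fun z => ψ₂ z t)) x =
      ((β ^ 2 * (2 * s ^ 2 - c ^ 2) / c ^ 3 : ℝ) : ℂ) * E2 := by
    rw [hd2]
    exact (((hasDerivAt_sechp β x).ofReal_comp).mul_const E2).deriv
  -- norms
  have hnE1 : ‖E1‖ = 1 := by
    rw [hE1, Complex.norm_exp]
    simp
  have hnE2 : ‖E2‖ = 1 := by
    rw [hE2, Complex.norm_exp]
    simp
  have hn1 : (‖ψ₁ x t‖ : ℂ) ^ 2 = ((T ^ 2 : ℝ) : ℂ) := by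
    rw [hψ₁' x t, norm_mul, ← hE1, hnE1, mul_one, Complex.norm_real]
    push_cast
    norm_cast
    simp [Real.norm_eq_abs, sq_abs]
    rfl
  have hn2 : (‖ψ₂ x t‖ : ℂ) ^ 2 = (((1 / c) ^ 2 : ℝ) : ℂ) := by
    rw [hψ₂' x t, norm_mul, ← hE2, hnE2, mul_one, Complex.norm_real]
    push_cast
    norm_cast
    simp [Real.norm_eq_abs, sq_abs]
    rfl
  have hT' : T = s / c := Real.tanh_eq_sinh_div_cosh _
  constructor
  · -- first equation
    rw [show (fun s => ψ₁ x s) = (fun u => ψ₁ x u) from rfl, ht1,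
      show (fun y => deriv (fun z => ψ₁ z t) y) = deriv (fun z => ψ₁ z t) from rfl, hdd1,
      hn1, hn2, hψ₁' x t, ← hE1, ← hT]
    have hkey : T + (1/2) * (-(2 * β ^ 2 * s) / c ^ 3) + (-(T ^ 2) + (1/2) * (1 / c) ^ 2) * T = 0 := by
      rw [hT', hβ2]
      field_simp
      ring_nf
      linear_combination (2 * s) * hcs
    have hcast := congrArg (fun r : ℝ => ((r : ℂ) * E1)) hkey
    push_cast at hcast ⊢
    linear_combination hcast - (((T : ℝ) : ℂ) * E1) * Complex.I_sq
  · -- second equation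
    rw [show (fun s => ψ₂ x s) = (fun u => ψ₂ x u) from rfl, ht2, hdd2,
      hn1, hn2, hψ₂' x t, ← hE2, ← hc]
    have hkey : -(1/4) * (1 / c) + (1/2) * (β ^ 2 * (2 * s ^ 2 - c ^ 2) / c ^ 3)
        + (-(1/2) * T ^ 2 + (1 / c) ^ 2) * (1 / c) = 0 := by
      rw [hT', hβ2]
      field_simp
      ring_nf
      linear_combination (-16) * hcs
    have hcast := congrArg (fun r : ℝ => ((r : ℂ) * E2)) hkey
    push_cast at hcast ⊢
    linear_combination hcast + (((c : ℂ))⁻¹ * E2 / 4) * Complex.I_sq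
end
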